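/- Let r < s < t be real numbers and x, y, z ∈ ℝⁿ. Then (t−r) L((x−z)/(t−r)) − (s−r) L((y−z)/(s−r)) = (t−s) L((x−y)/(t−s)) − (1/(t−r)) L( √((s−r)/(t−s)) (x−y) − √((t−s)/(s−r)) (y−z) ). In particular (t−r) L((x−z)/(t−r)) ≤ (t−s) L((x−y)/(t−s)) + (s−r) L((y−z)/(s−r)). -/

import Mathlib

open scoped RealInnerProductSpace
open Filter Topology Set Metric

noncomputable section

/-- The Lagrangian `L(q) = ½ ⟨A⁻¹ q, q⟩`. -/
def Lag {n : ℕ} (A : Matrix (Fin n) (Fin n) ℝ) (q : EuclideanSpace ℝ (Fin n)) : ℝ :=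
  (1 / 2) * ⟪Matrix.toEuclideanLin A⁻¹ q, q⟫

/-- The Hamiltonian `H(p) = ½ ⟨A p, p⟩`. -/
def Ham {n : ℕ} (A : Matrix (Fin n) (Fin n) ℝ) (p : EuclideanSpace ℝ (Fin n)) : ℝ :=
  (1 / 2) * ⟪Matrix.toEuclideanLin A p, p⟫

/-- Euclidean norm on `ℝ × ℝⁿ`. -/
def pnorm {n : ℕ} (V : ℝ × EuclideanSpace ℝ (Fin n)) : ℝ :=
  Real.sqrt (V.1 ^ 2 + ‖V.2‖ ^ 2)

/-- Euclidean pairing on `ℝ × ℝⁿ`. -/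
def pairR {n : ℕ} (P V : ℝ × EuclideanSpace ℝ (Fin n)) : ℝ :=
  P.1 * V.1 + ⟪P.2, V.2⟫

/-- Open Euclidean ball in `ℝ × ℝⁿ`. -/
def pball {n : ℕ} (X : ℝ × EuclideanSpace ℝ (Fin n)) (R : ℝ) :
    Set (ℝ × EuclideanSpace ℝ (Fin n)) :=
  {Y | pnorm (Y - X) < R}

/-- `B_t̄(X,R) = ((t̄,∞) × ℝⁿ) ∩ B(X,R)`. -/
def tball {n : ℕ} (tbar : ℝ) (X : ℝ × EuclideanSpace ℝ (Fin n)) (R : ℝ) :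
    Set (ℝ × EuclideanSpace ℝ (Fin n)) :=
  {Y | tbar < Y.1} ∩ pball X R

/-- Superdifferential of `w` at `X`:
`P ∈ D⁺w(X)` iff `limsup_{Y→X} (w(Y)−w(X)−⟨P,Y−X⟩)/|Y−X| ≤ 0`. -/
def superDiff {n : ℕ} (w : ℝ × EuclideanSpace ℝ (Fin n) → ℝ)
    (X P : ℝ × EuclideanSpace ℝ (Fin n)) : Prop :=
  ∀ ε > 0, ∀ᶠ Y in 𝓝[≠] X, w Y - w X - pairR P (Y - X) ≤ ε * pnorm (Y - X)


lemma lag_nonneg {n : ℕ} {A : Matrix (Fin n) (Fin n) ℝ} (hA : A.PosDef)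
    (q : EuclideanSpace ℝ (Fin n)) : 0 ≤ Lag A q := by
  have h := (hA.inv.posSemidef).dotProduct_mulVec_nonneg ((WithLp.equiv 2 (Fin n → ℝ)) q)
  have hin : ⟪Matrix.toEuclideanLin A⁻¹ q, q⟫ =
      dotProduct (star ((WithLp.equiv 2 (Fin n → ℝ)) q))
        (A⁻¹.mulVec ((WithLp.equiv 2 (Fin n → ℝ)) q)) := by
    rw [Matrix.toEuclideanLin_apply]
    simp [real_inner_comm, PiLp.inner_apply, dotProduct, mul_comm]
  unfold Lag
  rw [hin]
  positivity

lemma lag_expand {n : ℕ} {A : Matrix (Fin n) (Fin n) ℝ} (hA : A.PosDef)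
    (α β : ℝ) (u v : EuclideanSpace ℝ (Fin n)) :
    Lag A (α • u + β • v) = α ^ 2 * Lag A u + β ^ 2 * Lag A v +
      α * β * ⟪Matrix.toEuclideanLin A⁻¹ u, v⟫ := by
  have hsym : (Matrix.toEuclideanLin A⁻¹).IsSymmetric :=
    Matrix.isHermitian_iff_isSymmetric.mp (hA.inv.isHermitian)
  have hvu : ⟪Matrix.toEuclideanLin A⁻¹ v, u⟫ = ⟪Matrix.toEuclideanLin A⁻¹ u, v⟫ := by
    rw [hsym v u, real_inner_comm]
  unfold Lag
  simp only [map_add, map_smul, inner_add_left, inner_add_right,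
    real_inner_smul_left, real_inner_smul_right, hvu]
  ring

lemma lag_smul {n : ℕ} {A : Matrix (Fin n) (Fin n) ℝ} (c : ℝ)
    (q : EuclideanSpace ℝ (Fin n)) : Lag A (c • q) = c ^ 2 * Lag A q := by
  unfold Lag
  simp only [map_smul, real_inner_smul_left, real_inner_smul_right]
  ring

/-- the algebraic identity for the quadratic Lagrangian
`(t−r)L((x−z)/(t−r)) − (s−r)L((y−z)/(s−r))
  = (t−s)L((x−y)/(t−s)) − (1/(t−r)) L(√((s−r)/(t−s))(x−y) − √((t−s)/(s−r))(y−z))`,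
and the resulting triangle-type inequality. -/
theorem statement4 {n : ℕ} (hn : 1 ≤ n)
    (A : Matrix (Fin n) (Fin n) ℝ) (hA : A.PosDef)
    (r s t : ℝ) (hrs : r < s) (hst : s < t)
    (x y z : EuclideanSpace ℝ (Fin n)) :
    (t - r) * Lag A ((t - r)⁻¹ • (x - z)) - (s - r) * Lag A ((s - r)⁻¹ • (y - z)) =
      (t - s) * Lag A ((t - s)⁻¹ • (x - y)) -
        (t - r)⁻¹ * Lag A (Real.sqrt ((s - r) / (t - s)) • (x - y) -
          Real.sqrt ((t - s) / (s - r)) • (y - z)) ∧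
    (t - r) * Lag A ((t - r)⁻¹ • (x - z)) ≤
      (t - s) * Lag A ((t - s)⁻¹ • (x - y)) + (s - r) * Lag A ((s - r)⁻¹ • (y - z)) := by
  
  have ha : (0:ℝ) < t - s := by linarith
  have hb : (0:ℝ) < s - r := by linarith
  have hab : (0:ℝ) < t - r := by linarith
  set u := x - y with hu
  set v := y - z with hv
  have hxz : x - z = u + v := by rw [hu, hv]; abel
  set Lu := Lag A u with hLu
  set Lv := Lag A v with hLv
  set c := ⟪Matrix.toEuclideanLin A⁻¹ u, v⟫ with hc
  have e1 : Lag A ((t - r)⁻¹ • (x - z)) =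
      (t - r)⁻¹ ^ 2 * Lu + (t - r)⁻¹ ^ 2 * Lv + (t - r)⁻¹ * (t - r)⁻¹ * c := by
    rw [hxz, smul_add, lag_expand hA]
  have e2 : Lag A ((s - r)⁻¹ • v) = (s - r)⁻¹ ^ 2 * Lv := lag_smul _ _
  have e3 : Lag A ((t - s)⁻¹ • u) = (t - s)⁻¹ ^ 2 * Lu := lag_smul _ _
  have hsa : Real.sqrt ((s - r) / (t - s)) ^ 2 = (s - r) / (t - s) :=
    Real.sq_sqrt (by positivity)
  have hsb : Real.sqrt ((t - s) / (s - r)) ^ 2 = (t - s) / (s - r) :=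
    Real.sq_sqrt (by positivity)
  have hsab : Real.sqrt ((s - r) / (t - s)) * Real.sqrt ((t - s) / (s - r)) = 1 := by
    rw [← Real.sqrt_mul (by positivity), div_mul_div_comm, mul_comm (s - r),
      div_self (by positivity), Real.sqrt_one]
  have e4 : Lag A (Real.sqrt ((s - r) / (t - s)) • u - Real.sqrt ((t - s) / (s - r)) • v) =
      (s - r) / (t - s) * Lu + (t - s) / (s - r) * Lv - c := by
    rw [sub_eq_add_neg, ← neg_smul, lag_expand hA, hsa, neg_pow, hsb]
    have : Real.sqrt ((s - r) / (t - s)) * -Real.sqrt ((t - s) / (s - r)) = -1 := by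
      rw [mul_neg, hsab]
    rw [this]
    ring
  have heq : (t - r) * Lag A ((t - r)⁻¹ • (x - z)) - (s - r) * Lag A ((s - r)⁻¹ • v) =
      (t - s) * Lag A ((t - s)⁻¹ • u) -
        (t - r)⁻¹ * Lag A (Real.sqrt ((s - r) / (t - s)) • u -
          Real.sqrt ((t - s) / (s - r)) • v) := by
    rw [e1, e2, e3, e4]
    field_simp
    ring
  refine ⟨heq, ?_⟩
  have h4 : 0 ≤ Lag A (Real.sqrt ((s - r) / (t - s)) • u - Real.sqrt ((t - s) / (s - r)) • v) :=
    lag_nonneg hA _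
  have hpos : 0 ≤ (t - r)⁻¹ * Lag A (Real.sqrt ((s - r) / (t - s)) • u -
      Real.sqrt ((t - s) / (s - r)) • v) := by positivity
  linarith
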